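/- Let X be a real Banach space, x₀ ∈ X, R > 0, and let A satisfy the variable Lipschitz condition on B[x₀,R] with a continuous nonnegative function k on [0,R]. Set a = ‖A x₀ − x₀‖, a₊(r) = a + ∫₀^r k(t) dt, assume a₊ has a fixed point in [0,R], let r* be its smallest fixed point, and let x* be the fixed point of A obtained as the limit of x_{n+1} = A x_n starting from x₀. Let ξ₀ ∈ B[x₀,R] with ρ₀ = ‖ξ₀ − x₀‖, and assume either ρ₀ ≤ r*, or a₊(s) < s for all s with r* < s ≤ ρ₀. Then the successive approximations ξ_{n+1} = A ξ_n are well defined (all ξ_n lie in B[x₀,R]) and converge to x*. -/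

import Mathlib

open Set Filter Topology intervalIntegral

lemma seg_est {X : Type*} [NormedAddCommGroup X] [NormedSpace ℝ X]
    (x₀ : X) (R : ℝ) (hR : 0 < R) (A : X → X) (K : ℝ → ℝ)
    (hKc : Continuous K) (hKnn : ∀ u, 0 ≤ K u)
    (hLipK : ∀ x₁ x₂ : X, ∀ r : ℝ, ‖x₁ - x₀‖ ≤ r → ‖x₂ - x₀‖ ≤ r →
      0 < r → r ≤ R → ‖A x₁ - A x₂‖ ≤ K r * ‖x₁ - x₂‖)
    (t s : ℝ) (x y : X) (h0t : 0 ≤ t) (hts : t ≤ s) (hsR : s ≤ R)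
    (hx : ‖x - x₀‖ ≤ t) (hy : ‖y - x₀‖ ≤ s) (hxy : ‖y - x‖ ≤ s - t) :
    ‖A y - A x‖ ≤ ∫ u in t..s, K u := by
  rcases eq_or_lt_of_le hts with rfl | hlt
  · have hyx : y = x := by
      have : ‖y - x‖ ≤ 0 := by simpa using hxy
      have : y - x = 0 := by
        exact norm_le_zero_iff.mp this
      have := sub_eq_zero.mp this
      simp [this]
    simp [hyx]
  set γ : ℝ → X := fun l => x + l • (y - x) with hγ
  set f : ℝ → ℝ := fun l => ‖A (γ l) - A x‖ with hf
  set g : ℝ → ℝ := fun l => t + l * (s - t) with hg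
  set B : ℝ → ℝ := fun l => ∫ u in t..(g l), K u with hB
  set B' : ℝ → ℝ := fun l => K (g l) * (s - t) with hB'
  have hst : 0 < s - t := sub_pos.mpr hlt
  have hγrad : ∀ l : ℝ, 0 ≤ l → l ≤ 1 → ‖γ l - x₀‖ ≤ g l := by
    intro l hl0 hl1
    have : γ l - x₀ = (x - x₀) + l • (y - x) := by simp only [hγ]; abel
    rw [this]
    calc ‖(x - x₀) + l • (y - x)‖ ≤ ‖x - x₀‖ + ‖l • (y - x)‖ := norm_add_le _ _
      _ ≤ t + l * (s - t) := by
          rw [norm_smul, Real.norm_eq_abs, abs_of_nonneg hl0]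
          exact add_le_add hx (mul_le_mul_of_nonneg_left hxy hl0)
  have hgle : ∀ l : ℝ, l ≤ 1 → g l ≤ s := by
    intro l hl1
    have : l * (s - t) ≤ 1 * (s - t) := mul_le_mul_of_nonneg_right hl1 hst.le
    simp only [hg, one_mul] at this ⊢
    linarith
  have hgpos : ∀ l : ℝ, 0 < l → 0 < g l := by
    intro l hl
    have : 0 < l * (s - t) := mul_pos hl hst
    simp only [hg]; linarith
  have hγdist : ∀ l m : ℝ, ‖γ m - γ l‖ = |m - l| * ‖y - x‖ := by
    intro l m
    have : γ m - γ l = (m - l) • (y - x) := by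
      simp only [hγ, sub_smul]; abel
    rw [this, norm_smul, Real.norm_eq_abs]
  -- pairwise estimate
  have hpair : ∀ l m : ℝ, 0 ≤ l → l < m → m ≤ 1 →
      f m - f l ≤ K (g m) * ((m - l) * (s - t)) := by
    intro l m hl0 hlm hm1
    have h1 : f m - f l ≤ ‖A (γ m) - A (γ l)‖ := by
      have := norm_sub_norm_le (A (γ m) - A x) (A (γ l) - A x)
      simpa [f] using this.trans (le_of_eq (by congr 1; abel))
    have h2 : ‖A (γ m) - A (γ l)‖ ≤ K (g m) * ‖γ m - γ l‖ := by
      apply hLipK _ _ (g m) (hγrad m (hl0.trans hlm.le) hm1)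
        ((hγrad l hl0 (hlm.le.trans hm1)).trans ?_) (hgpos m (hl0.trans_lt hlm))
        ((hgle m hm1).trans hsR)
      simp only [hg]
      have : l * (s - t) ≤ m * (s - t) := mul_le_mul_of_nonneg_right hlm.le hst.le
      linarith
    have h3 : ‖γ m - γ l‖ ≤ (m - l) * (s - t) := by
      rw [hγdist, abs_of_pos (sub_pos.mpr hlm)]
      exact mul_le_mul_of_nonneg_left hxy (by linarith)
    calc f m - f l ≤ K (g m) * ‖γ m - γ l‖ := h1.trans h2
      _ ≤ K (g m) * ((m - l) * (s - t)) :=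
          mul_le_mul_of_nonneg_left h3 (hKnn _)
  -- continuity of f on [0,1]
  have hfc : ContinuousOn f (Icc 0 1) := by
    have hC : ∀ l ∈ Icc (0:ℝ) 1, ∀ m ∈ Icc (0:ℝ) 1,
        dist (f l) (f m) ≤ (K R * ‖y - x‖) * dist l m := by
      intro l hl m hm
      have h2 : ‖A (γ l) - A (γ m)‖ ≤ K R * ‖γ l - γ m‖ := by
        apply hLipK _ _ R ((hγrad l hl.1 hl.2).trans ((hgle l hl.2).trans hsR))
          ((hγrad m hm.1 hm.2).trans ((hgle m hm.2).trans hsR)) hR le_rfl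
      have h1 : dist (f l) (f m) ≤ ‖A (γ l) - A (γ m)‖ := by
        rw [Real.dist_eq]
        have := abs_norm_sub_norm_le (A (γ l) - A x) (A (γ m) - A x)
        refine this.trans (le_of_eq ?_)
        congr 1; abel
      refine (h1.trans h2).trans (le_of_eq ?_)
      rw [hγdist, Real.dist_eq, abs_sub_comm]
      ring
    refine LipschitzOnWith.continuousOn (K := (K R * ‖y - x‖).toNNReal) ?_
    apply LipschitzOnWith.of_dist_le_mul
    intro l hl m hm
    refine (hC l hl m hm).trans (mul_le_mul_of_nonneg_right ?_ dist_nonneg)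
    rw [Real.coe_toNNReal']
    exact le_max_left _ _
  -- derivative of B
  have hBd : ∀ l : ℝ, HasDerivAt B (B' l) l := by
    intro l
    have h1 : HasDerivAt (fun u => ∫ v in t..u, K v) (K (g l)) (g l) :=
      (hKc.integral_hasStrictDerivAt t (g l)).hasDerivAt
    have h2 : HasDerivAt g (s - t) l := by
      have h := ((hasDerivAt_id l).const_mul (s - t)).const_add t
      simpa [hg, mul_comm] using h
    exact HasDerivAt.comp l h1 h2
  have key : ∀ l ∈ Icc (0:ℝ) 1, f l ≤ B l := by
    apply image_le_of_liminf_slope_right_le_deriv_boundary (B' := B') hfc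
    · simp [f, B, γ, g]
    · exact fun l _ => (hBd l).continuousAt.continuousWithinAt
    · exact fun l _ => (hBd l).hasDerivWithinAt
    · intro l hl r hr
      apply Filter.Eventually.frequently
      have hcont : ContinuousAt (fun z => K (g z) * (s - t)) l :=
        ((hKc.comp (by continuity)).mul continuous_const).continuousAt
      have hev1 : ∀ᶠ z in 𝓝[>] l, K (g z) * (s - t) < r := by
        have : ∀ᶠ z in 𝓝 l, K (g z) * (s - t) < r :=
          hcont.tendsto.eventually_lt_const hr
        exact this.filter_mono nhdsWithin_le_nhds
      have hev2 : ∀ᶠ z in 𝓝[>] l, z ∈ Ioc l 1 :=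
        Ioc_mem_nhdsGT_of_mem ⟨le_rfl, hl.2⟩
      filter_upwards [hev1, hev2] with z hz1 hz2
      have hzl : 0 < z - l := sub_pos.mpr hz2.1
      rw [slope_def_field, div_lt_iff₀ hzl]
      calc f z - f l ≤ K (g z) * ((z - l) * (s - t)) := hpair l z hl.1 hz2.1 hz2.2
        _ = (K (g z) * (s - t)) * (z - l) := by ring
        _ < r * (z - l) := by exact mul_lt_mul_of_pos_right hz1 hzl
  have := key 1 ⟨zero_le_one, le_rfl⟩
  simpa [f, B, γ, g] using this

/-- Successive approximations `ξ_{n+1} = A ξ_n` starting from any admissible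
initial point `ξ₀ ∈ B[x₀,R]` (with `ρ₀ = ‖ξ₀ - x₀‖ ≤ r*` or `a₊(s) < s`
for `r* < s ≤ ρ₀`) stay in `B[x₀,R]` and converge to the fixed point `x*`. -/
theorem successive_approximations_general_initial_point
    {X : Type*} [NormedAddCommGroup X] [NormedSpace ℝ X] [CompleteSpace X]
    (x₀ : X) (R : ℝ) (hR : 0 < R) (A : X → X) (k : ℝ → ℝ)
    (hk_cont : ContinuousOn k (Set.Icc 0 R))
    (hk_nonneg : ∀ t ∈ Set.Icc (0 : ℝ) R, 0 ≤ k t)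
    (hLip : ∀ x₁ x₂ : X, ∀ r : ℝ, ‖x₁ - x₀‖ ≤ r → ‖x₂ - x₀‖ ≤ r →
      0 < r → r ≤ R → ‖A x₁ - A x₂‖ ≤ k r * ‖x₁ - x₂‖)
    (a : ℝ) (ha : a = ‖A x₀ - x₀‖)
    (aplus : ℝ → ℝ) (haplus : ∀ r : ℝ, aplus r = a + ∫ t in (0 : ℝ)..r, k t)
    (rstar : ℝ) (hrstar_mem : rstar ∈ Set.Icc (0 : ℝ) R)
    (hrstar_fix : aplus rstar = rstar)
    (hrstar_min : ∀ s ∈ Set.Icc (0 : ℝ) R, aplus s = s → rstar ≤ s)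
    (x : ℕ → X) (hx0 : x 0 = x₀) (hx_succ : ∀ n : ℕ, x (n + 1) = A (x n))
    (xstar : X) (hxstar_lim : Filter.Tendsto x Filter.atTop (nhds xstar))
    (hxstar_fix : A xstar = xstar)
    (ξ : ℕ → X) (hξ0 : ‖ξ 0 - x₀‖ ≤ R) (hξ_succ : ∀ n : ℕ, ξ (n + 1) = A (ξ n))
    (ρ₀ : ℝ) (hρ₀ : ρ₀ = ‖ξ 0 - x₀‖)
    (hadm : ρ₀ ≤ rstar ∨ ∀ s : ℝ, rstar < s → s ≤ ρ₀ → aplus s < s) :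
    (∀ n : ℕ, ‖ξ n - x₀‖ ≤ R) ∧
      Filter.Tendsto ξ Filter.atTop (nhds xstar) := by
  obtain ⟨hr0, hrR⟩ := hrstar_mem
  have ha0 : 0 ≤ a := ha ▸ norm_nonneg _
  have hρ0 : 0 ≤ ρ₀ := hρ₀ ▸ norm_nonneg _
  have hρR : ρ₀ ≤ R := hρ₀ ▸ hξ0
  -- extended kernel
  set K : ℝ → ℝ := fun r => k (min (max r 0) R) with hK
  have hclamp : ∀ r : ℝ, min (max r 0) R ∈ Set.Icc (0:ℝ) R := fun r =>
    ⟨le_min (le_max_right _ _) hR.le, min_le_right _ _⟩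
  have hKc : Continuous K := by
    apply hk_cont.comp_continuous (by continuity) hclamp
  have hKnn : ∀ u, 0 ≤ K u := fun u => hk_nonneg _ (hclamp u)
  have hKeq : ∀ u : ℝ, 0 ≤ u → u ≤ R → K u = k u := by
    intro u h1 h2
    simp [hK, max_eq_left h1, min_eq_left h2]
  have hLipK : ∀ x₁ x₂ : X, ∀ r : ℝ, ‖x₁ - x₀‖ ≤ r → ‖x₂ - x₀‖ ≤ r →
      0 < r → r ≤ R → ‖A x₁ - A x₂‖ ≤ K r * ‖x₁ - x₂‖ := by
    intro x₁ x₂ r h1 h2 h3 h4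
    rw [hKeq r h3.le h4]
    exact hLip x₁ x₂ r h1 h2 h3 h4
  -- majorant function
  set prim : ℝ → ℝ := fun r => ∫ u in (0:ℝ)..r, K u with hprim
  set F : ℝ → ℝ := fun r => a + prim r with hF
  have hFd : ∀ b : ℝ, HasDerivAt prim (K b) b := fun b =>
    (hKc.integral_hasStrictDerivAt 0 b).hasDerivAt
  have hFc : Continuous F := by
    apply continuous_const.add
    exact continuous_iff_continuousAt.mpr fun b => (hFd b).continuousAt
  have hint : ∀ u v : ℝ, u ≤ v → prim u + (∫ w in u..v, K w) = prim v := fun u v _ =>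
    intervalIntegral.integral_add_adjacent_intervals
      (hKc.intervalIntegrable _ _) (hKc.intervalIntegrable _ _)
  have hFmono : Monotone F := by
    intro u v huv
    have h1 := hint u v huv
    have h2 : 0 ≤ ∫ w in u..v, K w :=
      intervalIntegral.integral_nonneg huv fun w _ => hKnn w
    simp only [hF]
    linarith
  have hFeq : ∀ r : ℝ, 0 ≤ r → r ≤ R → aplus r = F r := by
    intro r h1 h2
    rw [haplus]
    simp only [hF, hprim]
    congr 1
    apply intervalIntegral.integral_congr
    intro u hu
    rw [Set.uIcc_of_le h1] at hu
    exact (hKeq u hu.1 (hu.2.trans h2)).symm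
  have hFr : F rstar = rstar := by rw [← hFeq rstar hr0 hrR]; exact hrstar_fix
  have hF0 : 0 ≤ F 0 := by
    simp only [hF, hprim]
    simpa using ha0
  -- sequences T and S
  set T : ℕ → ℝ := fun n => F^[n] 0 with hT
  set S : ℕ → ℝ := fun n => F^[n] ρ₀ with hS
  have hT0 : T 0 = 0 := rfl
  have hS0 : S 0 = ρ₀ := rfl
  have hTsucc : ∀ n, T (n + 1) = F (T n) := fun n => Function.iterate_succ_apply' F n 0
  have hSsucc : ∀ n, S (n + 1) = F (S n) := fun n => Function.iterate_succ_apply' F n ρ₀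
  have hTb : ∀ n, 0 ≤ T n ∧ T n ≤ rstar := by
    intro n
    induction n with
    | zero => exact ⟨le_rfl, hr0⟩
    | succ n ih =>
      rw [hTsucc]
      constructor
      · calc (0:ℝ) ≤ F 0 := hF0
          _ ≤ F (T n) := hFmono ih.1
      · calc F (T n) ≤ F rstar := hFmono ih.2
          _ = rstar := hFr
  have hTmono : Monotone T := by
    apply monotone_nat_of_le_succ
    intro n
    induction n with
    | zero => rw [hTsucc, hT0]; exact hF0
    | succ n ih => rw [hTsucc (n+1), hTsucc n]; exact hFmono (by rw [← hTsucc n]; exact ih)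
  -- limit of a fixed-point-converging sequence
  have hfix_lim : ∀ (U : ℕ → ℝ), (∀ n, U (n+1) = F (U n)) → (∀ n, 0 ≤ U n) →
      (∀ n, U n ≤ max ρ₀ rstar) → ∀ l : ℝ, Filter.Tendsto U Filter.atTop (nhds l) →
      F l = l ∧ 0 ≤ l ∧ l ≤ max ρ₀ rstar := by
    intro U hUs hU0 hUb l hl
    have h1 : Filter.Tendsto (fun n => F (U n)) Filter.atTop (nhds (F l)) :=
      (hFc.continuousAt.tendsto).comp hl
    have h2 : Filter.Tendsto (fun n => U (n + 1)) Filter.atTop (nhds l) :=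
      hl.comp (Filter.tendsto_add_atTop_nat 1)
    have h3 : Filter.Tendsto (fun n => U (n + 1)) Filter.atTop (nhds (F l)) := by
      simpa only [hUs] using h1
    exact ⟨tendsto_nhds_unique h3 h2, ge_of_tendsto' hl hU0, le_of_tendsto' hl hUb⟩
  have hmaxR : max ρ₀ rstar ≤ R := max_le hρR hrR
  -- T converges to rstar
  have hT_lim : Filter.Tendsto T Filter.atTop (nhds rstar) := by
    rcases tendsto_of_monotone hTmono with h | ⟨l, hl⟩
    · exfalso
      have := (h.eventually_gt_atTop rstar).exists
      obtain ⟨n, hn⟩ := this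
      exact absurd (hTb n).2 (not_le.mpr hn)
    · obtain ⟨hfix, hl0, hlb⟩ := hfix_lim T hTsucc (fun n => (hTb n).1)
        (fun n => (hTb n).2.trans (le_max_right _ _)) l hl
      have hlR : l ≤ R := hlb.trans hmaxR
      have : rstar ≤ l := hrstar_min l ⟨hl0, hlR⟩ (by rw [hFeq l hl0 hlR]; exact hfix)
      have hle : l ≤ rstar := le_of_tendsto' hl (fun n => (hTb n).2)
      rwa [le_antisymm hle this] at hl
  -- S facts
  have key : ρ₀ ≤ rstar ∨ (rstar < ρ₀ ∧ ∀ s : ℝ, rstar < s → s ≤ ρ₀ → aplus s < s) := by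
    rcases hadm with h | h
    · exact Or.inl h
    · rcases le_or_gt ρ₀ rstar with h' | h'
      · exact Or.inl h'
      · exact Or.inr ⟨h', h⟩
  obtain ⟨hTS, hSR, hS_lim⟩ : (∀ n, T n ≤ S n) ∧ (∀ n, S n ≤ R) ∧
      Filter.Tendsto S Filter.atTop (nhds rstar) := by
    rcases key with hle | ⟨hlt, hdec⟩
    · have claim : ∀ n, T n ≤ S n ∧ S n ≤ rstar := by
        intro n
        induction n with
        | zero => exact ⟨hρ0, hle⟩
        | succ n ih =>
          rw [hTsucc, hSsucc]
          exact ⟨hFmono ih.1, (hFmono ih.2).trans_eq hFr⟩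
      refine ⟨fun n => (claim n).1, fun n => (claim n).2.trans hrR, ?_⟩
      exact tendsto_of_tendsto_of_tendsto_of_le_of_le hT_lim tendsto_const_nhds
        (fun n => (claim n).1) (fun n => (claim n).2)
    · have claim : ∀ n, rstar ≤ S n ∧ S n ≤ ρ₀ := by
        intro n
        induction n with
        | zero => exact ⟨hlt.le, le_rfl⟩
        | succ n ih =>
          rw [hSsucc]
          refine ⟨hFr ▸ hFmono ih.1, ?_⟩
          rcases eq_or_lt_of_le ih.1 with heq | hlt'
          · rw [← heq, hFr, heq]; exact ih.2
          · have h1 : F (S n) = aplus (S n) :=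
              (hFeq (S n) (hr0.trans ih.1) (ih.2.trans hρR)).symm
            rw [h1]
            exact (hdec (S n) hlt' ih.2).le.trans ih.2
      have hstep : ∀ n, S (n + 1) ≤ S n := by
        intro n
        rw [hSsucc]
        rcases eq_or_lt_of_le (claim n).1 with heq | hlt'
        · rw [← heq, hFr]
        · have h1 : F (S n) = aplus (S n) :=
            (hFeq (S n) (hr0.trans (claim n).1) ((claim n).2.trans hρR)).symm
          rw [h1]
          exact (hdec (S n) hlt' (claim n).2).le
      have hanti : Antitone S := antitone_nat_of_succ_le hstep
      have hS_lim : Filter.Tendsto S Filter.atTop (nhds rstar) := by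
        rcases tendsto_of_antitone hanti with h | ⟨l, hl⟩
        · exfalso
          obtain ⟨n, hn⟩ := (h.eventually_lt_atBot rstar).exists
          exact absurd (claim n).1 (not_le.mpr hn)
        · obtain ⟨hfix, hl0, hlb⟩ := hfix_lim S hSsucc (fun n => hr0.trans (claim n).1)
            (fun n => (claim n).2.trans (le_max_left _ _)) l hl
          have hlR : l ≤ R := hlb.trans hmaxR
          have h1 : rstar ≤ l := ge_of_tendsto' hl (fun n => (claim n).1)
          rcases eq_or_lt_of_le h1 with heq | hlt'
          · rwa [← heq] at hl
          · exfalso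
            have hlρ : l ≤ ρ₀ := le_of_tendsto' hl fun n => (claim n).2
            have := hdec l hlt' hlρ
            rw [hFeq l hl0 hlR, hfix] at this
            exact lt_irrefl l this
      exact ⟨fun n => (hTb n).2.trans (claim n).1, fun n => (claim n).2.trans hρR, hS_lim⟩
  -- main vector induction
  have hx0' : ‖x₀ - x₀‖ ≤ (0:ℝ) := by simp
  have main : ∀ n, ‖x n - x₀‖ ≤ T n ∧ ‖ξ n - x₀‖ ≤ S n ∧ ‖ξ n - x n‖ ≤ S n - T n := by
    intro n
    induction n with
    | zero =>
      refine ⟨by rw [hx0, hT0]; simp, by rw [← hρ₀]; exact le_rfl, ?_⟩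
      rw [hx0, hT0, hS0, ← hρ₀]
      simp
    | succ n ih =>
      obtain ⟨ihx, ihξ, ihd⟩ := ih
      have hTn0 : 0 ≤ T n := (hTb n).1
      have hTnR : T n ≤ R := (hTb n).2.trans hrR
      have hSnR : S n ≤ R := hSR n
      have hTSn : T n ≤ S n := hTS n
      have e1 : ‖A (x n) - A x₀‖ ≤ ∫ u in (0:ℝ)..(T n), K u :=
        seg_est x₀ R hR A K hKc hKnn hLipK 0 (T n) x₀ (x n) le_rfl hTn0 hTnR
          hx0' (ihx.trans (le_refl _)) (by simpa using ihx)
      have hx1 : ‖x (n+1) - x₀‖ ≤ T (n+1) := by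
        rw [hx_succ, hTsucc]
        calc ‖A (x n) - x₀‖ ≤ ‖A (x n) - A x₀‖ + ‖A x₀ - x₀‖ := norm_sub_le_norm_sub_add_norm_sub _ _ _
          _ ≤ prim (T n) + a := add_le_add e1 (le_of_eq ha.symm)
          _ = F (T n) := by rw [hF]; ring
      have e2 : ‖A (ξ n) - A x₀‖ ≤ ∫ u in (0:ℝ)..(S n), K u :=
        seg_est x₀ R hR A K hKc hKnn hLipK 0 (S n) x₀ (ξ n) le_rfl (hTn0.trans hTSn) hSnR
          hx0' ihξ (by simpa using ihξ)
      have hξ1 : ‖ξ (n+1) - x₀‖ ≤ S (n+1) := by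
        rw [hξ_succ, hSsucc]
        calc ‖A (ξ n) - x₀‖ ≤ ‖A (ξ n) - A x₀‖ + ‖A x₀ - x₀‖ := norm_sub_le_norm_sub_add_norm_sub _ _ _
          _ ≤ prim (S n) + a := add_le_add e2 (le_of_eq ha.symm)
          _ = F (S n) := by rw [hF]; ring
      have e3 : ‖A (ξ n) - A (x n)‖ ≤ ∫ u in (T n)..(S n), K u :=
        seg_est x₀ R hR A K hKc hKnn hLipK (T n) (S n) (x n) (ξ n) hTn0 hTSn hSnR
          ihx ihξ ihd
      have hd1 : ‖ξ (n+1) - x (n+1)‖ ≤ S (n+1) - T (n+1) := by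
        rw [hξ_succ, hx_succ, hSsucc, hTsucc]
        refine e3.trans (le_of_eq ?_)
        have := hint (T n) (S n) hTSn
        simp only [hF]
        linarith
      exact ⟨hx1, hξ1, hd1⟩
  refine ⟨fun n => (main n).2.1.trans (hSR n), ?_⟩
  have hdiff : Filter.Tendsto (fun n => ξ n - x n) Filter.atTop (nhds 0) := by
    apply squeeze_zero_norm (fun n => (main n).2.2)
    have := hS_lim.sub hT_lim
    simpa using this
  have := hdiff.add hxstar_lim
  simpa using this
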